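/- Suppose S ⊆ ℕ contains at least two distinct safe instances s₁ ≠ s₂ with s₁ ∈ S and s₂ ∈ S. Then there is no language capturing the total-correctness property ψ(g) := ∀ x, ∃ y, y ∈ eval g x ∧ y ∈ S ('g halts on every input and outputs a safe instance'): there is no set L of codes with ComputablePred (· ∈ L) such that every c ∈ L satisfies ψ and every code c with ψ c has some c' ∈ L with eval c' = eval c. -/

import Mathlib

open Nat.Partrec Code

theorem no_language_captures_total_correctness (S : Set ℕ) (s₁ s₂ : ℕ)
    (hs₁ : s₁ ∈ S) (hs₂ : s₂ ∈ S) (hne : s₁ ≠ s₂) :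
    ¬ ∃ L : Set Nat.Partrec.Code, ComputablePred (· ∈ L) ∧
        (∀ c ∈ L, ∀ x, ∃ y, y ∈ c.eval x ∧ y ∈ S) ∧
        (∀ c : Nat.Partrec.Code, (∀ x, ∃ y, y ∈ c.eval x ∧ y ∈ S) →
          ∃ c' ∈ L, c'.eval = c.eval) := by
  rintro ⟨L, hdec, hsound, hcomp⟩
  obtain ⟨f, hf, hpf⟩ := ComputablePred.computable_iff.1 hdec
  -- swap function
  set sw : ℕ → ℕ := fun y => bif y = s₂ then s₁ else s₂ with hsw
  -- diagonal function
  set d : ℕ →. ℕ := fun x =>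
    bif f (Denumerable.ofNat Nat.Partrec.Code x) then
      ((Denumerable.ofNat Nat.Partrec.Code x).eval x).map sw
    else pure s₁ with hd
  have hswc : Computable₂ fun (_ : ℕ) (y : ℕ) => sw y := by
    apply Primrec₂.to_comp
    exact (Primrec.cond (Primrec.eq.comp Primrec.snd (Primrec.const s₂)).decide
      (Primrec.const s₁) (Primrec.const s₂)).to₂
  have hdp : Partrec d := by
    apply Partrec.cond (hf.comp (Computable.ofNat _))
    · exact Partrec.map
        ((Nat.Partrec.Code.eval_part).comp (Computable.ofNat _) Computable.id) hswc
    · exact Partrec.const' (pure s₁)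
  obtain ⟨cd, hcd⟩ := Nat.Partrec.Code.exists_code.1 (Partrec.nat_iff.1 hdp)
  -- d satisfies ψ
  have hψ : ∀ x, ∃ y, y ∈ cd.eval x ∧ y ∈ S := by
    intro x
    rw [hcd]
    by_cases hx : Denumerable.ofNat Nat.Partrec.Code x ∈ L
    · have hb : f (Denumerable.ofNat Nat.Partrec.Code x) = true := by
        have := congrFun hpf (Denumerable.ofNat Nat.Partrec.Code x); exact this ▸ hx
      obtain ⟨y, hy, _⟩ := hsound _ hx x
      refine ⟨sw y, ?_, ?_⟩
      · simp [hd, hb, Part.mem_map_iff]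
        exact ⟨y, hy, rfl⟩
      · by_cases h2 : y = s₂ <;> simp [hsw, h2, hs₁, hs₂]
    · have hb : f (Denumerable.ofNat Nat.Partrec.Code x) = false := by
        have h := congrFun hpf (Denumerable.ofNat Nat.Partrec.Code x)
        simp only [h] at hx
        simpa using hx
      exact ⟨s₁, by simp [hd, hb], hs₁⟩
  obtain ⟨c', hc'L, hc'eq⟩ := hcomp cd hψ
  -- evaluate at index of c'
  set n := Encodable.encode c' with hn
  have hon : Denumerable.ofNat Nat.Partrec.Code n = c' := Denumerable.ofNat_encode c'
  have hb : f c' = true := by have := congrFun hpf c'; exact this ▸ hc'L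
  obtain ⟨y, hy, _⟩ := hsound _ hc'L n
  have hy' : y ∈ d n := by rw [← hcd, ← hc'eq]; exact hy
  have : y ∈ (c'.eval n).map sw := by
    simpa [hd, hon, hb] using hy'
  obtain ⟨z, hz, hzy⟩ := (Part.mem_map_iff _).1 this
  have hzy' : z = y := Part.mem_unique hz hy
  subst hzy'
  -- y = sw y, contradiction
  by_cases h2 : z = s₂
  · subst h2; simp [hsw] at hzy; exact hne hzy
  · simp [hsw, h2] at hzy; exact h2 hzy.symm
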